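/- arXiv:2112.04905 — 2 statements merged into one kernel-verified Lean document; each statement's English description precedes it below -/
import Mathlib

section
/- Suppose W ∈ ℝ^{m×n} satisfies the restricted isometry property with constant δ_r ≤ 0.1 for r = 4s, i.e., (1−δ_r)‖x‖₂² ≤ ‖W·x‖₂² ≤ (1+δ_r)‖x‖₂² for all x with at most r nonzero entries. Let Z ∈ ℝ^{n×B} be s-row-sparse, E ∈ ℝ^{n×B} arbitrary, and H = Z + E with all entries of H nonnegative. Then after t iterations of the i-SpaSP algorithm applied to (W, H) with sparsity level s, the active set S_t of size at most s satisfies ‖μ(H − H_{S_t,:})‖₂ ≤ (0.444)^t ‖μ(H)‖₂ + (14 + 7/√s)‖μ(E)‖₁. -/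
open Finset Matrix

noncomputable def mu {m n : ℕ} (X : Matrix (Fin m) (Fin n) ℝ) : Fin m → ℝ :=
  fun i => ∑ j, X i j

noncomputable def l1 {n : ℕ} (v : Fin n → ℝ) : ℝ := ∑ i, |v i|

noncomputable def l2 {n : ℕ} (v : Fin n → ℝ) : ℝ := Real.sqrt (∑ i, (v i) ^ 2)

noncomputable def frob {m n : ℕ} (X : Matrix (Fin m) (Fin n) ℝ) : ℝ :=
  Real.sqrt (∑ i, ∑ j, (X i j) ^ 2)

def vrestrict {n : ℕ} (v : Fin n → ℝ) (S : Finset (Fin n)) : Fin n → ℝ :=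
  fun i => if i ∈ S then v i else 0

def rowSel {m n : ℕ} (X : Matrix (Fin m) (Fin n) ℝ) (S : Finset (Fin m)) :
    Matrix (Fin m) (Fin n) ℝ := Matrix.of fun i j => if i ∈ S then X i j else 0

def RIP {m n : ℕ} (W : Matrix (Fin m) (Fin n) ℝ) (r : ℕ) (δ : ℝ) : Prop :=
  ∀ x : Fin n → ℝ, (Finset.univ.filter (fun i => x i ≠ 0)).card ≤ r →
    (1 - δ) * (∑ i, (x i) ^ 2) ≤ ∑ i, (W.mulVec x i) ^ 2 ∧
    ∑ i, (W.mulVec x i) ^ 2 ≤ (1 + δ) * ∑ i, (x i) ^ 2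

def isTopK {n : ℕ} (k : ℕ) (v : Fin n → ℝ) (S : Finset (Fin n)) : Prop :=
  S.card = k ∧ ∀ i ∈ S, ∀ j ∉ S, |v j| ≤ |v i|

/-- One iteration of i-SpaSP: given the current active set `S`, compute the
residual `V = W·H − W·H_{S,:}`, the importance vector `y = μ(Wᵀ·V)`, take `Ω`
the support of the `2s` largest entries of `y`, merge `Ω* = Ω ∪ S`, restrict
`b = μ(H)|_{Ω*}` and take `S'` the support of the `s` largest entries of `b`. -/
def spaspStep {m n B : ℕ} (W : Matrix (Fin m) (Fin n) ℝ)
    (H : Matrix (Fin n) (Fin B) ℝ) (s : ℕ) (S S' : Finset (Fin n)) : Prop :=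
  ∃ Ω : Finset (Fin n),
    isTopK (2 * s) (mu (Wᵀ * (W * H - W * rowSel H S))) Ω ∧
    S' ⊆ Ω ∪ S ∧
    isTopK s (vrestrict (mu H) (Ω ∪ S)) S'

lemma l2_eq_norm {n : ℕ} (v : Fin n → ℝ) :
    l2 v = ‖(WithLp.equiv 2 (Fin n → ℝ)).symm v‖ := by
  rw [EuclideanSpace.norm_eq]; simp [l2, Real.norm_eq_abs, sq_abs]

lemma l2_nonneg {n : ℕ} (v : Fin n → ℝ) : 0 ≤ l2 v := Real.sqrt_nonneg _

lemma l1_nonneg {n : ℕ} (v : Fin n → ℝ) : 0 ≤ l1 v :=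
  Finset.sum_nonneg fun i _ => abs_nonneg _

lemma sq_l2 {n : ℕ} (v : Fin n → ℝ) : (l2 v) ^ 2 = ∑ i, (v i) ^ 2 :=
  Real.sq_sqrt (Finset.sum_nonneg fun i _ => sq_nonneg _)

lemma l2_add {n : ℕ} (u v : Fin n → ℝ) : l2 (u + v) ≤ l2 u + l2 v := by
  rw [l2_eq_norm, l2_eq_norm, l2_eq_norm]; exact norm_add_le _ _

lemma l2_sum_le {n k : ℕ} (f : Fin k → (Fin n → ℝ)) :
    l2 (∑ i, f i) ≤ ∑ i, l2 (f i) := by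
  simp only [l2_eq_norm]
  have : (WithLp.equiv 2 (Fin n → ℝ)).symm (∑ i, f i)
      = ∑ i, (WithLp.equiv 2 (Fin n → ℝ)).symm (f i) :=
    map_sum (WithLp.linearEquiv 2 ℝ (Fin n → ℝ)).symm f univ
  rw [this]
  exact norm_sum_le _ _

lemma l2_smul {n : ℕ} (c : ℝ) (v : Fin n → ℝ) : l2 (c • v) = |c| * l2 v := by
  rw [l2_eq_norm, l2_eq_norm]
  have : (WithLp.equiv 2 (Fin n → ℝ)).symm (c • v)
      = c • (WithLp.equiv 2 (Fin n → ℝ)).symm v := rfl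
  rw [this, norm_smul, Real.norm_eq_abs]

lemma l2_mono_sq {n : ℕ} (u v : Fin n → ℝ) (h : ∀ i, u i ^ 2 ≤ v i ^ 2) :
    l2 u ≤ l2 v :=
  Real.sqrt_le_sqrt (Finset.sum_le_sum fun i _ => h i)

lemma l2_le_l1 {n : ℕ} (v : Fin n → ℝ) : l2 v ≤ l1 v := by
  have h : ∑ i, (v i) ^ 2 ≤ (∑ i, |v i|) ^ 2 := by
    have := Finset.sum_sq_le_sq_sum_of_nonneg (s := (univ : Finset (Fin n)))
      (f := fun i => |v i|) (fun i _ => abs_nonneg _)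
    simpa [sq_abs] using this
  calc l2 v ≤ Real.sqrt ((∑ i, |v i|) ^ 2) := Real.sqrt_le_sqrt h
  _ = l1 v := Real.sqrt_sq (Finset.sum_nonneg fun i _ => abs_nonneg _)

lemma inner_le_l2_mul_l2 {n : ℕ} (u v : Fin n → ℝ) :
    ∑ i, u i * v i ≤ l2 u * l2 v := by
  have h : (inner ℝ ((WithLp.equiv 2 (Fin n → ℝ)).symm u)
      ((WithLp.equiv 2 (Fin n → ℝ)).symm v) : ℝ) = ∑ i, u i * v i := by
    simp [PiLp.inner_apply, RCLike.inner_apply, mul_comm]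
  rw [← h, l2_eq_norm, l2_eq_norm]
  exact real_inner_le_norm _ _

/-- sum comparison via cardinality: every value on `A` is at most every value on `B`. -/
lemma sum_le_sum_of_card_le {n : ℕ} (f : Fin n → ℝ) (A B : Finset (Fin n))
    (hcard : A.card ≤ B.card) (hnn : ∀ b ∈ B, 0 ≤ f b)
    (h : ∀ a ∈ A, ∀ b ∈ B, f a ≤ f b) :
    ∑ i ∈ A, f i ≤ ∑ i ∈ B, f i := by
  rcases A.eq_empty_or_nonempty with rfl | hA
  · simp [Finset.sum_nonneg hnn]
  have hB : B.Nonempty := Finset.card_pos.mp (lt_of_lt_of_le (Finset.card_pos.mpr hA) hcard)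
  obtain ⟨a₀, ha₀, hmax⟩ := A.exists_max_image f hA
  obtain ⟨b₀, hb₀, hmin⟩ := B.exists_min_image f hB
  calc ∑ i ∈ A, f i ≤ A.card • f a₀ := Finset.sum_le_card_nsmul A f _ (fun x hx => hmax x hx)
  _ ≤ B.card • f b₀ := by
      have h1 : f a₀ ≤ f b₀ := h a₀ ha₀ b₀ hb₀
      have h2 : (0:ℝ) ≤ f b₀ := hnn b₀ hb₀
      simp only [nsmul_eq_mul]
      have h3 : (A.card : ℝ) ≤ B.card := Nat.cast_le.mpr hcard
      nlinarith [Nat.cast_nonneg (α := ℝ) A.card]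
  _ ≤ ∑ i ∈ B, f i := Finset.card_nsmul_le_sum B f _ (fun x hx => hmin x hx)

-- support
noncomputable def supp {n : ℕ} (v : Fin n → ℝ) : Finset (Fin n) := univ.filter (fun i => v i ≠ 0)

lemma supp_subset_iff {n : ℕ} (v : Fin n → ℝ) (F : Finset (Fin n)) :
    supp v ⊆ F ↔ ∀ i, i ∉ F → v i = 0 := by
  constructor
  · intro h i hi
    by_contra hv
    exact hi (h (by simp [supp, hv]))
  · intro h i hi
    simp only [supp, mem_filter] at hi
    by_contra hF
    exact hi.2 (h i hF)

lemma supp_vrestrict {n : ℕ} (v : Fin n → ℝ) (F : Finset (Fin n)) :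
    supp (vrestrict v F) ⊆ F := by
  rw [supp_subset_iff]
  intro i hi
  simp [vrestrict, hi]

-- RIP restated with l2 and supp
lemma rip_upper {m n : ℕ} {W : Matrix (Fin m) (Fin n) ℝ} {r : ℕ} {δ : ℝ}
    (hrip : RIP W r δ) (hδ : 0 ≤ δ) (v : Fin n → ℝ) (hv : (supp v).card ≤ r) :
    l2 (W.mulVec v) ≤ Real.sqrt (1 + δ) * l2 v := by
  have h := (hrip v hv).2
  calc l2 (W.mulVec v) ≤ Real.sqrt ((1 + δ) * ∑ i, (v i)^2) := Real.sqrt_le_sqrt h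
  _ = Real.sqrt (1 + δ) * l2 v := Real.sqrt_mul (by linarith) _

lemma rip_lower {m n : ℕ} {W : Matrix (Fin m) (Fin n) ℝ} {r : ℕ} {δ : ℝ}
    (hrip : RIP W r δ) (v : Fin n → ℝ) (hv : (supp v).card ≤ r) :
    (1 - δ) * (∑ i, (v i)^2) ≤ ∑ i, (W.mulVec v i)^2 := (hrip v hv).1

-- adjoint swap
lemma adjoint_swap {m n : ℕ} (W : Matrix (Fin m) (Fin n) ℝ) (w : Fin n → ℝ)
    (z : Fin m → ℝ) : ∑ i, w i * (Wᵀ.mulVec z) i = ∑ k, W.mulVec w k * z k := by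
  simp only [Matrix.mulVec, dotProduct, Matrix.transpose_apply, Finset.mul_sum,
    Finset.sum_mul]
  rw [Finset.sum_comm]
  apply Finset.sum_congr rfl; intro k _
  apply Finset.sum_congr rfl; intro i _
  ring

-- ‖W e‖₂ ≤ √(1+δ) ‖e‖₁ for arbitrary e (crude bound)
lemma mulVec_l1_bound {m n s : ℕ} {W : Matrix (Fin m) (Fin n) ℝ} {δ : ℝ}
    (hrip : RIP W (4 * s) δ) (hδ : 0 ≤ δ) (hs : 1 ≤ s) (e : Fin n → ℝ) :
    l2 (W.mulVec e) ≤ Real.sqrt (1 + δ) * l1 e := by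
  have hone : ∀ k i, (∑ j, W k j * (Pi.single i 1 : Fin n → ℝ) j) = W k i := by
    intro k i
    rw [Finset.sum_eq_single i]
    · simp
    · intro b _ hb; simp [Pi.single_apply, hb]
    · simp
  have hmv : W.mulVec e = ∑ i, e i • W.mulVec ((Pi.single i 1 : Fin n → ℝ)) := by
    funext k
    simp only [Finset.sum_apply, Pi.smul_apply, smul_eq_mul, Matrix.mulVec, dotProduct,
      hone]
    apply Finset.sum_congr rfl
    intro j _
    ring
  rw [hmv]
  calc l2 (∑ i, e i • W.mulVec ((Pi.single i 1 : Fin n → ℝ))) ≤ ∑ i, l2 (e i • W.mulVec ((Pi.single i 1 : Fin n → ℝ))) :=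
        l2_sum_le _
  _ ≤ ∑ i, |e i| * Real.sqrt (1 + δ) := by
      apply Finset.sum_le_sum
      intro i _
      rw [l2_smul]
      apply mul_le_mul_of_nonneg_left _ (abs_nonneg _)
      have hsupp : (supp ((Pi.single i 1 : Fin n → ℝ))).card ≤ 4 * s := by
        have : supp ((Pi.single i 1 : Fin n → ℝ)) ⊆ {i} := by
          rw [supp_subset_iff]
          intro j hj
          simp only [Finset.mem_singleton] at hj
          simp [Pi.single_apply, hj]
        calc (supp ((Pi.single i 1 : Fin n → ℝ))).card ≤ 1 := by
              simpa using Finset.card_le_card this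
        _ ≤ 4 * s := by omega
      have hrw := rip_upper hrip hδ ((Pi.single i 1 : Fin n → ℝ)) hsupp
      have hsum : (∑ j, ((Pi.single i 1 : Fin n → ℝ) j)^2) = 1 := by
        rw [Finset.sum_eq_single i]
        · simp
        · intro b _ hb; simp [Pi.single_apply, hb]
        · simp
      have hl2 : l2 ((Pi.single i 1 : Fin n → ℝ)) = 1 := by
        rw [l2, hsum, Real.sqrt_one]
      rw [hl2, mul_one] at hrw
      exact hrw
  _ = Real.sqrt (1 + δ) * l1 e := by rw [l1, ← Finset.sum_mul, mul_comm]
lemma sum_sq_expand {m : ℕ} (a b : Fin m → ℝ) :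
    ∑ k, (a k + b k)^2 = (∑ k, a k^2) + 2*(∑ k, a k * b k) + ∑ k, b k ^2 := by
  have h : ∀ k, (a k + b k)^2 = a k^2 + (2*(a k * b k) + b k^2) := fun k => by ring
  simp only [h, Finset.sum_add_distrib, Finset.mul_sum]
  ring

lemma supp_add_subset {n : ℕ} (p q : Fin n → ℝ) : supp (p + q) ⊆ supp p ∪ supp q := by
  intro i hi
  simp only [supp, mem_filter, mem_univ, true_and, mem_union, Pi.add_apply] at *
  by_contra h
  push_neg at h
  rw [h.1, h.2] at hi
  simp at hi

lemma supp_sub_subset {n : ℕ} (p q : Fin n → ℝ) : supp (p - q) ⊆ supp p ∪ supp q := by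
  intro i hi
  simp only [supp, mem_filter, mem_univ, true_and, mem_union, Pi.sub_apply] at *
  by_contra h
  push_neg at h
  rw [h.1, h.2] at hi
  simp at hi

lemma bilinear {m n s : ℕ} {W : Matrix (Fin m) (Fin n) ℝ} {δ : ℝ}
    (hrip : RIP W (4 * s) δ) (p q : Fin n → ℝ)
    (h : (supp p ∪ supp q).card ≤ 4 * s) :
    (∑ k, W.mulVec p k * W.mulVec q k) - ∑ i, p i * q i
      ≤ δ/2 * ((∑ i, p i^2) + ∑ i, q i^2) := by
  have hpq : (supp (p + q)).card ≤ 4 * s :=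
    le_trans (Finset.card_le_card (supp_add_subset p q)) h
  have hpq' : (supp (p - q)).card ≤ 4 * s :=
    le_trans (Finset.card_le_card (supp_sub_subset p q)) h
  have h1 := (hrip (p + q) hpq).2
  have h2 := (hrip (p - q) hpq').1
  have e1 : W.mulVec (p + q) = fun k => W.mulVec p k + W.mulVec q k := by
    rw [Matrix.mulVec_add]; rfl
  have e2 : W.mulVec (p - q) = fun k => W.mulVec p k + (- W.mulVec q) k := by
    rw [Matrix.mulVec_sub]; funext k; simp [sub_eq_add_neg]
  rw [e1, sum_sq_expand] at h1
  rw [e2, sum_sq_expand] at h2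
  have e3 : ∀ i, (p + q) i = p i + q i := fun i => rfl
  have e4 : ∀ i, (p - q) i = p i + (-q) i := fun i => by simp [sub_eq_add_neg]
  simp only [e3] at h1
  simp only [e4] at h2
  rw [sum_sq_expand p q] at h1
  rw [sum_sq_expand p (-q)] at h2
  simp only [Pi.neg_apply, neg_sq, mul_neg, Finset.sum_neg_distrib] at h2
  nlinarith [h1, h2]

lemma vrestrict_mul_self {n : ℕ} (z : Fin n → ℝ) (F : Finset (Fin n)) (i : Fin n) :
    vrestrict z F i * z i = (vrestrict z F i)^2 := by
  by_cases h : i ∈ F <;> simp [vrestrict, h] <;> ring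

lemma restricted_approx {m n s : ℕ} {W : Matrix (Fin m) (Fin n) ℝ} {δ : ℝ}
    (hrip : RIP W (4 * s) δ) (hδ : 0 ≤ δ) (hδ1 : δ ≤ 0.1) (a : Fin n → ℝ) (F : Finset (Fin n))
    (h : (F ∪ supp a).card ≤ 4 * s) :
    l2 (vrestrict (fun i => Wᵀ.mulVec (W.mulVec a) i - a i) F) ≤ δ * l2 a := by
  set z : Fin n → ℝ := fun i => Wᵀ.mulVec (W.mulVec a) i - a i with hz
  set w : Fin n → ℝ := vrestrict z F with hw
  have hkey : ∑ i, (w i)^2 = (∑ k, W.mulVec w k * W.mulVec a k) - ∑ i, w i * a i := by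
    have h1 : ∑ i, (w i)^2 = ∑ i, w i * z i := by
      apply Finset.sum_congr rfl
      intro i _
      rw [vrestrict_mul_self]
    have h2 : ∑ i, w i * z i = (∑ i, w i * Wᵀ.mulVec (W.mulVec a) i) - ∑ i, w i * a i := by
      simp only [hz, mul_sub, Finset.sum_sub_distrib]
    rw [h1, h2, adjoint_swap]
  set A := ∑ i, (w i)^2 with hA
  set Q := ∑ i, (a i)^2 with hQ
  have hAnn : 0 ≤ A := Finset.sum_nonneg fun i _ => sq_nonneg _
  have hQnn : 0 ≤ Q := Finset.sum_nonneg fun i _ => sq_nonneg _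
  have hcw : ∀ c : ℝ, 0 < c → c * A ≤ δ/2 * (c^2 * A + Q) := by
    intro c hc
    have hsupp : (supp (c • w) ∪ supp a).card ≤ 4 * s := by
      refine le_trans (Finset.card_le_card ?_) h
      apply Finset.union_subset_union_left
      refine subset_trans ?_ (supp_vrestrict z F)
      intro i hi
      simp only [supp, mem_filter, mem_univ, true_and, Pi.smul_apply, smul_eq_mul] at *
      intro h0
      exact hi (show c * w i = 0 by show c * vrestrict z F i = 0; rw [h0, mul_zero])
    have hb := bilinear hrip (c • w) a hsupp
    have hmv : W.mulVec (c • w) = c • W.mulVec w := by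
      rw [Matrix.mulVec_smul]
    rw [hmv] at hb
    simp only [Pi.smul_apply, smul_eq_mul, mul_pow] at hb
    have e1 : ∑ k, c * W.mulVec w k * W.mulVec a k = c * ∑ k, W.mulVec w k * W.mulVec a k := by
      rw [Finset.mul_sum]; apply Finset.sum_congr rfl; intro k _; ring
    have e2 : ∑ i, c * w i * a i = c * ∑ i, w i * a i := by
      rw [Finset.mul_sum]; apply Finset.sum_congr rfl; intro k _; ring
    have e3 : ∑ i, c^2 * (w i)^2 = c^2 * A := by
      rw [hA, Finset.mul_sum]
    rw [e1, e2, e3] at hb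
    calc c * A = c * ((∑ k, W.mulVec w k * W.mulVec a k) - ∑ i, w i * a i) := by rw [← hkey]
    _ ≤ δ/2 * (c^2 * A + Q) := by rw [mul_sub]; linarith [hb]
  have hgoal : Real.sqrt A ≤ δ * Real.sqrt Q := by
    rcases eq_or_lt_of_le hAnn with hA0 | hApos
    · rw [← hA0, Real.sqrt_zero]
      exact mul_nonneg hδ (Real.sqrt_nonneg _)
    rcases eq_or_lt_of_le hQnn with hQ0 | hQpos
    · exfalso
      have hc := hcw 1 one_pos
      rw [← hQ0] at hc
      nlinarith [hc, hApos]
    · have hsA : (0:ℝ) < Real.sqrt A := Real.sqrt_pos.mpr hApos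
      have hsQ : (0:ℝ) < Real.sqrt Q := Real.sqrt_pos.mpr hQpos
      have hsA2 : Real.sqrt A ^ 2 = A := Real.sq_sqrt hAnn
      have hsQ2 : Real.sqrt Q ^ 2 = Q := Real.sq_sqrt hQnn
      have hc := hcw (Real.sqrt Q / Real.sqrt A) (by positivity)
      have hA' : A = Real.sqrt A * Real.sqrt A := (Real.mul_self_sqrt hAnn).symm
      have hAne : Real.sqrt A ≠ 0 := ne_of_gt hsA
      have e1 : Real.sqrt Q / Real.sqrt A * A = Real.sqrt Q * Real.sqrt A := by
        calc Real.sqrt Q / Real.sqrt A * A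
            = Real.sqrt Q / Real.sqrt A * (Real.sqrt A * Real.sqrt A) := by rw [← hA']
        _ = Real.sqrt Q * Real.sqrt A := by rw [← mul_assoc, div_mul_cancel₀ _ hAne]
      have e2 : (Real.sqrt Q / Real.sqrt A)^2 * A = Q := by
        rw [div_pow, hsA2, hsQ2, div_mul_cancel₀ _ (ne_of_gt hApos)]
      rw [e1, e2] at hc
      nlinarith [hc, hsA, hsQ, hsQ2]
  exact hgoal

lemma noise_bound {m n s : ℕ} {W : Matrix (Fin m) (Fin n) ℝ} {δ : ℝ}
    (hrip : RIP W (4 * s) δ) (hδ : 0 ≤ δ) (hs : 1 ≤ s) (ε : Fin n → ℝ)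
    (F : Finset (Fin n)) (hF : F.card ≤ 4 * s) :
    l2 (vrestrict (Wᵀ.mulVec (W.mulVec ε)) F) ≤ (1 + δ) * l1 ε := by
  set w : Fin n → ℝ := vrestrict (Wᵀ.mulVec (W.mulVec ε)) F with hw
  have hkey : (l2 w)^2 = ∑ k, W.mulVec w k * W.mulVec ε k := by
    rw [sq_l2]
    have h1 : ∑ i, (w i)^2 = ∑ i, w i * Wᵀ.mulVec (W.mulVec ε) i := by
      apply Finset.sum_congr rfl
      intro i _
      rw [vrestrict_mul_self]
    rw [h1, adjoint_swap]
  have hWw : l2 (W.mulVec w) ≤ Real.sqrt (1 + δ) * l2 w := by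
    apply rip_upper hrip hδ
    exact le_trans (Finset.card_le_card (supp_vrestrict _ F)) hF
  have hWε : l2 (W.mulVec ε) ≤ Real.sqrt (1 + δ) * l1 ε := mulVec_l1_bound hrip hδ hs ε
  have hCS : ∑ k, W.mulVec w k * W.mulVec ε k ≤ l2 (W.mulVec w) * l2 (W.mulVec ε) :=
    inner_le_l2_mul_l2 _ _
  have hsq : Real.sqrt (1 + δ) * Real.sqrt (1 + δ) = 1 + δ :=
    Real.mul_self_sqrt (by linarith)
  have hchain : (l2 w)^2 ≤ (1 + δ) * l2 w * l1 ε := by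
    calc (l2 w)^2 ≤ l2 (W.mulVec w) * l2 (W.mulVec ε) := by rw [hkey]; exact hCS
    _ ≤ (Real.sqrt (1 + δ) * l2 w) * (Real.sqrt (1 + δ) * l1 ε) := by
        apply mul_le_mul hWw hWε (l2_nonneg _)
        exact mul_nonneg (Real.sqrt_nonneg _) (l2_nonneg _)
    _ = (1 + δ) * l2 w * l1 ε := by rw [mul_mul_mul_comm, hsq, ← mul_assoc]
  rcases eq_or_lt_of_le (l2_nonneg w) with h0 | hpos
  · rw [← h0]
    have := l1_nonneg ε
    positivity
  · nlinarith [hchain, hpos]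
lemma sum_sq_vrestrict {n : ℕ} (v : Fin n → ℝ) (F : Finset (Fin n)) :
    ∑ i, (vrestrict v F i)^2 = ∑ i ∈ F, (v i)^2 := by
  have h : ∀ i, (vrestrict v F i)^2 = if i ∈ F then (v i)^2 else 0 := by
    intro i; simp only [vrestrict]; split <;> simp
  rw [Finset.sum_congr rfl (fun i _ => h i), Finset.sum_ite_mem, Finset.univ_inter]

lemma l2_neg {n : ℕ} (p : Fin n → ℝ) : l2 (fun i => -(p i)) = l2 p := by
  simp [l2]

lemma l2_add3 {n : ℕ} (p q r : Fin n → ℝ) :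
    l2 (fun i => p i + q i + r i) ≤ l2 p + l2 q + l2 r := by
  have h1 : (fun i => p i + q i + r i) = (p + q) + r := rfl
  rw [h1]
  calc l2 ((p + q) + r) ≤ l2 (p + q) + l2 r := l2_add _ _
  _ ≤ l2 p + l2 q + l2 r := by linarith [l2_add p q]

lemma l2_add' {n : ℕ} (p q : Fin n → ℝ) :
    l2 (fun i => p i + q i) ≤ l2 p + l2 q := l2_add p q

lemma step_bound {m n s : ℕ} (hs : 1 ≤ s) (W : Matrix (Fin m) (Fin n) ℝ) (δ : ℝ)
    (hδ : 0 ≤ δ) (hδ1 : δ ≤ 0.1) (hrip : RIP W (4 * s) δ)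
    (x e : Fin n → ℝ) (hx : (supp x).card ≤ s)
    (S S' Ω : Finset (Fin n)) (hS : S.card ≤ s)
    (hΩ : isTopK (2 * s) (Wᵀ.mulVec (W.mulVec ((x + e) - vrestrict (x + e) S))) Ω)
    (hsub : S' ⊆ Ω ∪ S)
    (htop : isTopK s (vrestrict (x + e) (Ω ∪ S)) S') :
    l2 ((x + e) - vrestrict (x + e) S')
      ≤ 0.2 * l2 ((x + e) - vrestrict (x + e) S) + 4.4 * l1 e := by
  set u : Fin n → ℝ := x + e with hu
  set v : Fin n → ℝ := u - vrestrict u S with hvdef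
  set ε : Fin n → ℝ := fun i => e i - vrestrict e S i with hε
  set a : Fin n → ℝ := fun i => x i - vrestrict x S i with ha
  set T : Finset (Fin n) := supp x with hT
  set G : Finset (Fin n) := Ω ∪ S with hG
  set R : Finset (Fin n) := T ∩ G with hR
  set y : Fin n → ℝ := Wᵀ.mulVec (W.mulVec v) with hy
  -- basic pointwise facts
  have hui : ∀ i, u i = x i + e i := fun i => rfl
  have hvi : ∀ i, v i = a i + ε i := by
    intro i
    show u i - vrestrict u S i = _
    simp only [vrestrict, ha, hε, hui]
    split <;> ring
  have hai0 : ∀ i, i ∉ T → a i = 0 := by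
    intro i hi
    have hx0 : x i = 0 := by
      by_contra hc
      exact hi (by simp [hT, supp, hc])
    simp only [ha, vrestrict, hx0]
    split <;> ring
  have haS : ∀ i, i ∈ S → a i = 0 := by
    intro i hi; simp only [ha, vrestrict, if_pos hi]; ring
  have hεabs : ∀ i, |ε i| ≤ |e i| := by
    intro i
    simp only [hε, vrestrict]
    split
    · simp
    · simp
  have hl1ε : l1 ε ≤ l1 e := Finset.sum_le_sum fun i _ => hεabs i
  have hl2ε : l2 ε ≤ l1 e := by
    calc l2 ε ≤ l1 ε := l2_le_l1 ε
    _ ≤ l1 e := hl1ε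
  have hl2e : l2 e ≤ l1 e := l2_le_l1 e
  have hl2a : l2 a ≤ l2 v + l1 e := by
    have hfa : a = fun i => v i + (-(ε i)) := by
      funext i; rw [hvi i]; ring
    calc l2 a = l2 (fun i => v i + (-(ε i))) := by rw [← hfa]
    _ ≤ l2 v + l2 (fun i => -(ε i)) := l2_add' _ _
    _ = l2 v + l2 ε := by rw [l2_neg]
    _ ≤ l2 v + l1 e := by linarith
  -- support of a
  have hsuppa : supp a ⊆ T := by
    intro i hi
    simp only [supp, mem_filter, mem_univ, true_and] at hi
    by_contra hc
    exact hi (hai0 i hc)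
  have hcarda : (supp a).card ≤ s := le_trans (Finset.card_le_card hsuppa) hx
  -- decomposition of y
  set ya : Fin n → ℝ := Wᵀ.mulVec (W.mulVec a) with hya
  set ye : Fin n → ℝ := Wᵀ.mulVec (W.mulVec ε) with hye
  set za : Fin n → ℝ := fun i => ya i - a i with hza
  have hysum : ∀ i, y i = a i + za i + ye i := by
    have hWv : W.mulVec v = W.mulVec a + W.mulVec ε := by
      have : v = a + ε := funext hvi
      rw [this, Matrix.mulVec_add]
    intro i
    have : y i = ya i + ye i := by
      rw [hy, hWv, Matrix.mulVec_add]
      rfl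
    rw [this, hza]; ring
  -- cardinality facts
  have hΩcard : Ω.card = 2 * s := hΩ.1
  have hTcard : T.card ≤ s := hx
  -- Step A ingredients
  have hB1 : ∀ F : Finset (Fin n), (F ∪ supp a).card ≤ 4 * s →
      l2 (vrestrict za F) ≤ δ * l2 a := by
    intro F hF
    exact restricted_approx hrip hδ hδ1 a F hF
  have hB2 : ∀ F : Finset (Fin n), F.card ≤ 4 * s →
      l2 (vrestrict ye F) ≤ (1 + δ) * l1 ε := by
    intro F hF
    exact noise_bound hrip hδ hs ε F hF
  have hcard1 : ((Ω \ T) ∪ supp a).card ≤ 4 * s := by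
    calc ((Ω \ T) ∪ supp a).card ≤ (Ω \ T).card + (supp a).card := Finset.card_union_le _ _
    _ ≤ Ω.card + s := by
        have := Finset.card_le_card (Finset.sdiff_subset (s := Ω) (t := T))
        omega
    _ ≤ 4 * s := by omega
  have hcard2 : ((T \ Ω) ∪ supp a).card ≤ 4 * s := by
    calc ((T \ Ω) ∪ supp a).card ≤ (T \ Ω).card + (supp a).card := Finset.card_union_le _ _
    _ ≤ T.card + s := by
        have := Finset.card_le_card (Finset.sdiff_subset (s := T) (t := Ω))
        omega
    _ ≤ 4 * s := by omega
  have hcard3 : (Ω \ T).card ≤ 4 * s := by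
    have := Finset.card_le_card (Finset.sdiff_subset (s := Ω) (t := T))
    omega
  have hcard4 : (T \ Ω).card ≤ 4 * s := by
    have := Finset.card_le_card (Finset.sdiff_subset (s := T) (t := Ω))
    omega
  -- top-2s property: energy of y on T \ Ω is dominated by that on Ω \ T
  have htops : ∑ i ∈ T \ Ω, (y i)^2 ≤ ∑ i ∈ Ω \ T, (y i)^2 := by
    apply sum_le_sum_of_card_le
    · have h1 := Finset.card_sdiff_add_card_inter T Ω
      have h2 := Finset.card_sdiff_add_card_inter Ω T
      rw [Finset.inter_comm Ω T] at h2
      omega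
    · intro b _; exact sq_nonneg _
    · intro j hj i hi
      have hjΩ : j ∉ Ω := (Finset.mem_sdiff.mp hj).2
      have hiΩ : i ∈ Ω := (Finset.mem_sdiff.mp hi).1
      have habs : |y j| ≤ |y i| := hΩ.2 i hiΩ j hjΩ
      calc (y j)^2 = |y j|^2 := (sq_abs _).symm
      _ ≤ |y i|^2 := by exact pow_le_pow_left₀ (abs_nonneg _) habs 2
      _ = (y i)^2 := sq_abs _
  -- bound on l2 of y restricted to Ω \ T
  have hyΩT : l2 (vrestrict y (Ω \ T)) ≤ δ * l2 a + (1 + δ) * l1 ε := by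
    have hzero : vrestrict a (Ω \ T) = fun _ => (0:ℝ) := by
      funext i
      simp only [vrestrict]
      split
      · next h => exact hai0 i (Finset.mem_sdiff.mp h).2
      · rfl
    have hsplit : vrestrict y (Ω \ T) = fun i =>
        vrestrict a (Ω \ T) i + vrestrict za (Ω \ T) i + vrestrict ye (Ω \ T) i := by
      funext i
      simp only [vrestrict]
      split
      · exact hysum i
      · ring
    calc l2 (vrestrict y (Ω \ T))
        ≤ l2 (vrestrict a (Ω \ T)) + l2 (vrestrict za (Ω \ T)) + l2 (vrestrict ye (Ω \ T)) := by
          rw [hsplit]; exact l2_add3 _ _ _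
    _ ≤ 0 + δ * l2 a + (1 + δ) * l1 ε := by
        have h1 : l2 (vrestrict a (Ω \ T)) = 0 := by rw [hzero]; simp [l2]
        have h2 := hB1 (Ω \ T) hcard1
        have h3 := hB2 (Ω \ T) hcard3
        linarith
    _ = δ * l2 a + (1 + δ) * l1 ε := by ring
  -- Step A conclusion
  have hstepA : l2 (vrestrict a (univ \ Ω)) ≤ 2 * δ * l2 a + 2 * (1 + δ) * l1 ε := by
    have heq : l2 (vrestrict a (univ \ Ω)) = l2 (vrestrict a (T \ Ω)) := by
      apply le_antisymm
      · apply l2_mono_sq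
        intro i
        simp only [vrestrict]
        by_cases h1 : i ∈ univ \ Ω
        · rw [if_pos h1]
          by_cases h2 : i ∈ T \ Ω
          · rw [if_pos h2]
          · have : i ∉ T := by
              intro hT'
              exact h2 (Finset.mem_sdiff.mpr ⟨hT', (Finset.mem_sdiff.mp h1).2⟩)
            rw [hai0 i this]
            split <;> simp
        · rw [if_neg h1]
          split <;> simp [sq_nonneg]
      · apply l2_mono_sq
        intro i
        simp only [vrestrict]
        by_cases h2 : i ∈ T \ Ω
        · rw [if_pos h2, if_pos (Finset.mem_sdiff.mpr ⟨Finset.mem_univ i,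
            (Finset.mem_sdiff.mp h2).2⟩)]
        · rw [if_neg h2]
          split <;> simp [sq_nonneg]
    have hsplit : vrestrict a (T \ Ω) = fun i =>
        vrestrict y (T \ Ω) i + (-(vrestrict za (T \ Ω) i)) + (-(vrestrict ye (T \ Ω) i)) := by
      funext i
      simp only [vrestrict]
      split
      · next h => rw [hysum i]; ring
      · ring
    have h1 : l2 (vrestrict y (T \ Ω)) ≤ l2 (vrestrict y (Ω \ T)) := by
      apply Real.sqrt_le_sqrt
      rw [sum_sq_vrestrict, sum_sq_vrestrict]
      exact htops
    have h2 := hB1 (T \ Ω) hcard2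
    have h3 := hB2 (T \ Ω) hcard4
    rw [heq]
    calc l2 (vrestrict a (T \ Ω))
        ≤ l2 (vrestrict y (T \ Ω)) + l2 (fun i => -(vrestrict za (T \ Ω) i))
          + l2 (fun i => -(vrestrict ye (T \ Ω) i)) := by
          rw [hsplit]; exact l2_add3 _ _ _
    _ = l2 (vrestrict y (T \ Ω)) + l2 (vrestrict za (T \ Ω)) + l2 (vrestrict ye (T \ Ω)) := by
        rw [l2_neg, l2_neg]
    _ ≤ l2 (vrestrict y (Ω \ T)) + (δ * l2 a) + ((1 + δ) * l1 ε) := by linarith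
    _ ≤ 2 * δ * l2 a + 2 * (1 + δ) * l1 ε := by linarith [hyΩT]
  -- Step C : pruning
  have hScard : S'.card = s := htop.1
  have hRsub : R ⊆ G := Finset.inter_subset_right
  have hRcard : R.card ≤ s := le_trans (Finset.card_le_card Finset.inter_subset_left) hTcard
  have hprune : ∑ i ∈ R, (u i)^2 ≤ ∑ i ∈ S', (u i)^2 := by
    have hkey : ∑ i ∈ R \ S', (u i)^2 ≤ ∑ i ∈ S' \ R, (u i)^2 := by
      apply sum_le_sum_of_card_le
      · have h1 := Finset.card_sdiff_add_card_inter R S'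
        have h2 := Finset.card_sdiff_add_card_inter S' R
        rw [Finset.inter_comm S' R] at h2
        omega
      · intro b _; exact sq_nonneg _
      · intro j hj i hi
        have hjS' : j ∉ S' := (Finset.mem_sdiff.mp hj).2
        have hiS' : i ∈ S' := (Finset.mem_sdiff.mp hi).1
        have habs := htop.2 i hiS' j hjS'
        have hjG : j ∈ G := hRsub (Finset.mem_sdiff.mp hj).1
        have hiG : i ∈ G := hsub hiS'
        simp only [vrestrict, if_pos hjG, if_pos hiG] at habs
        calc (u j)^2 = |u j|^2 := (sq_abs _).symm
        _ ≤ |u i|^2 := by exact pow_le_pow_left₀ (abs_nonneg _) habs 2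
        _ = (u i)^2 := sq_abs _
    have e1 := Finset.sum_inter_add_sum_sdiff R S' (fun i => (u i)^2)
    have e2 := Finset.sum_inter_add_sum_sdiff S' R (fun i => (u i)^2)
    rw [Finset.inter_comm S' R] at e2
    linarith
  have hpruneC : l2 (vrestrict u (G \ S')) ≤ l1 e := by
    have h1 : ∑ i ∈ G \ S', (u i)^2 ≤ ∑ i ∈ G \ R, (u i)^2 := by
      have e1 := Finset.sum_sdiff_eq_sub (f := fun i => (u i)^2) hRsub
      have e2 := Finset.sum_sdiff_eq_sub (f := fun i => (u i)^2) hsub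
      linarith [hprune]
    have h2 : ∑ i ∈ G \ R, (u i)^2 ≤ ∑ i, (e i)^2 := by
      calc ∑ i ∈ G \ R, (u i)^2 = ∑ i, (vrestrict u (G \ R) i)^2 := (sum_sq_vrestrict _ _).symm
      _ ≤ ∑ i, (e i)^2 := by
          apply Finset.sum_le_sum
          intro i _
          simp only [vrestrict]
          split
          · next h =>
              have hiG : i ∈ G := (Finset.mem_sdiff.mp h).1
              have hiT : i ∉ T := by
                intro hT'
                exact (Finset.mem_sdiff.mp h).2 (Finset.mem_inter.mpr ⟨hT', hiG⟩)
              have hx0 : x i = 0 := by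
                by_contra hc
                exact hiT (by simp [hT, supp, hc])
              have hue : u i = e i := by rw [hui i, hx0, zero_add]
              rw [hue]
          · simpa using sq_nonneg (e i)
    calc l2 (vrestrict u (G \ S')) = Real.sqrt (∑ i ∈ G \ S', (u i)^2) := by
          rw [l2, sum_sq_vrestrict]
    _ ≤ Real.sqrt (∑ i, (e i)^2) := Real.sqrt_le_sqrt (le_trans h1 h2)
    _ = l2 e := rfl
    _ ≤ l1 e := hl2e
  -- final assembly
  have hdecomp : (u - vrestrict u S') = fun i =>
      vrestrict u (univ \ G) i + vrestrict u (G \ S') i := by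
    funext i
    show u i - vrestrict u S' i = _
    simp only [vrestrict]
    by_cases hiS' : i ∈ S'
    · have hiG : i ∈ G := hsub hiS'
      rw [if_pos hiS', if_neg (by simp [hiG] : i ∉ univ \ G),
        if_neg (by simp [hiS'] : i ∉ G \ S')]
      ring
    · rw [if_neg hiS']
      by_cases hiG : i ∈ G
      · rw [if_neg (by simp [hiG] : i ∉ univ \ G),
          if_pos (Finset.mem_sdiff.mpr ⟨hiG, hiS'⟩)]
        ring
      · rw [if_pos (Finset.mem_sdiff.mpr ⟨Finset.mem_univ i, hiG⟩),
          if_neg (fun hc => hiG (Finset.mem_sdiff.mp hc).1)]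
        ring
  have hfirst : l2 (vrestrict u (univ \ G)) ≤ l2 (vrestrict a (univ \ Ω)) + l1 e := by
    have hsplit : vrestrict u (univ \ G) = fun i =>
        vrestrict a (univ \ G) i + vrestrict ε (univ \ G) i := by
      funext i
      simp only [vrestrict]
      split
      · next h =>
          have hiS : i ∉ S := fun hc => (Finset.mem_sdiff.mp h).2 (Finset.mem_union_right Ω hc)
          rw [hui i]
          simp only [ha, hε, vrestrict, if_neg hiS]
          ring
      · ring
    have h1 : l2 (vrestrict a (univ \ G)) ≤ l2 (vrestrict a (univ \ Ω)) := by
      apply l2_mono_sq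
      intro i
      simp only [vrestrict]
      by_cases h : i ∈ univ \ G
      · rw [if_pos h, if_pos (Finset.mem_sdiff.mpr ⟨Finset.mem_univ i,
          fun hc => (Finset.mem_sdiff.mp h).2 (Finset.mem_union_left S hc)⟩)]
      · rw [if_neg h]
        split <;> simp [sq_nonneg]
    have h2 : l2 (vrestrict ε (univ \ G)) ≤ l1 e := by
      calc l2 (vrestrict ε (univ \ G)) ≤ l2 ε := by
            apply l2_mono_sq
            intro i
            simp only [vrestrict]
            split
            · exact le_refl _
            · simp [sq_nonneg]
      _ ≤ l1 e := hl2ε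
    calc l2 (vrestrict u (univ \ G))
        ≤ l2 (vrestrict a (univ \ G)) + l2 (vrestrict ε (univ \ G)) := by
          rw [hsplit]; exact l2_add' _ _
    _ ≤ l2 (vrestrict a (univ \ Ω)) + l1 e := by linarith
  calc l2 (u - vrestrict u S')
      ≤ l2 (vrestrict u (univ \ G)) + l2 (vrestrict u (G \ S')) := by
        rw [hdecomp]; exact l2_add' _ _
  _ ≤ (l2 (vrestrict a (univ \ Ω)) + l1 e) + l1 e := by linarith [hpruneC, hfirst]
  _ ≤ (2 * δ * l2 a + 2 * (1 + δ) * l1 ε + l1 e) + l1 e := by linarith [hstepA]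
  _ ≤ 2 * δ * (l2 v + l1 e) + 2 * (1 + δ) * l1 e + 2 * l1 e := by
      have := mul_le_mul_of_nonneg_left hl2a (by linarith : (0:ℝ) ≤ 2 * δ)
      have := mul_le_mul_of_nonneg_left hl1ε (by linarith : (0:ℝ) ≤ 2 * (1 + δ))
      linarith
  _ ≤ 0.2 * l2 v + 4.4 * l1 e := by
      have h1 : 0 ≤ l2 v := l2_nonneg v
      have h2 : 0 ≤ l1 e := l1_nonneg e
      nlinarith
lemma mu_mulmat {m n B : ℕ} (A : Matrix (Fin m) (Fin n) ℝ) (X : Matrix (Fin n) (Fin B) ℝ) :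
    mu (A * X) = A.mulVec (mu X) := by
  funext i
  simp only [mu, Matrix.mul_apply, Matrix.mulVec, dotProduct, Finset.mul_sum]
  rw [Finset.sum_comm]

lemma mu_submat {m n : ℕ} (X Y : Matrix (Fin m) (Fin n) ℝ) :
    mu (X - Y) = fun i => mu X i - mu Y i := by
  funext i
  simp only [mu, Matrix.sub_apply, Finset.sum_sub_distrib]

lemma mu_rowSel {m n : ℕ} (H : Matrix (Fin m) (Fin n) ℝ) (S : Finset (Fin m)) :
    mu (rowSel H S) = vrestrict (mu H) S := by
  funext i
  simp only [mu, rowSel, vrestrict, Matrix.of_apply]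
  split <;> simp

lemma mu_resid {m n : ℕ} (H : Matrix (Fin m) (Fin n) ℝ) (S : Finset (Fin m)) :
    mu (H - rowSel H S) = mu H - vrestrict (mu H) S := by
  rw [mu_submat, mu_rowSel]
  rfl

lemma mu_importance {m n B : ℕ} (W : Matrix (Fin m) (Fin n) ℝ)
    (H : Matrix (Fin n) (Fin B) ℝ) (S : Finset (Fin n)) :
    mu (Wᵀ * (W * H - W * rowSel H S))
      = Wᵀ.mulVec (W.mulVec (mu H - vrestrict (mu H) S)) := by
  rw [mu_mulmat, mu_submat, mu_mulmat, mu_mulmat, mu_rowSel]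
  congr 1
  rw [Matrix.mulVec_sub]
  rfl

open Classical in
theorem ispasp_hidden_residual {m n B s : ℕ} (hs : 1 ≤ s)
    (W : Matrix (Fin m) (Fin n) ℝ) (Z E H : Matrix (Fin n) (Fin B) ℝ) (δ : ℝ)
    (hδ : δ ≤ 0.1) (hrip : RIP W (4 * s) δ)
    (hZ : (Finset.univ.filter (fun i => ∃ j, Z i j ≠ 0)).card ≤ s)
    (hH : H = Z + E) (hpos : ∀ i j, 0 ≤ H i j)
    (S : ℕ → Finset (Fin n)) (h0 : S 0 = ∅)
    (hstep : ∀ t, spaspStep W H s (S t) (S (t + 1))) (t : ℕ) :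
    (S t).card ≤ s ∧
    l2 (mu (H - rowSel H (S t)))
      ≤ (0.444 : ℝ) ^ t * l2 (mu H) + (14 + 7 / Real.sqrt s) * l1 (mu E) := by
  -- normalize the RIP constant to be nonnegative
  set δ₀ : ℝ := max δ 0 with hδ₀
  have hδ0 : 0 ≤ δ₀ := le_max_right _ _
  have hδ01 : δ₀ ≤ 0.1 := max_le hδ (by norm_num)
  have hδle : δ ≤ δ₀ := le_max_left _ _
  have hrip0 : RIP W (4 * s) δ₀ := by
    intro z hz
    obtain ⟨h1, h2⟩ := hrip z hz
    have hnn : (0:ℝ) ≤ ∑ i, (z i)^2 := Finset.sum_nonneg fun i _ => sq_nonneg _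
    constructor
    · nlinarith
    · nlinarith
  set x : Fin n → ℝ := mu Z with hx'
  set e : Fin n → ℝ := mu E with he'
  have hmuH : mu H = x + e := by
    funext i
    simp only [mu, hH, Matrix.add_apply, Finset.sum_add_distrib, hx', he', Pi.add_apply]
  have hx : (supp x).card ≤ s := by
    refine le_trans (Finset.card_le_card ?_) hZ
    intro i hi
    simp only [supp, mem_filter, mem_univ, true_and] at hi ⊢
    by_contra hc
    push_neg at hc
    exact hi (Finset.sum_eq_zero fun j _ => hc j)
  have main : ∀ τ, (S τ).card ≤ s ∧
      l2 ((x + e) - vrestrict (x + e) (S τ)) ≤ (0.2:ℝ)^τ * l2 (x + e) + 5.5 * l1 e := by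
    intro τ
    induction τ with
    | zero =>
      constructor
      · rw [h0]; simp
      · have hv0 : vrestrict (x + e) (S 0) = fun _ => (0:ℝ) := by
          funext i
          rw [h0]
          simp [vrestrict]
        have : (x + e) - vrestrict (x + e) (S 0) = x + e := by
          funext i
          rw [hv0]
          show (x + e) i - 0 = (x + e) i
          ring
        rw [this, pow_zero, one_mul]
        linarith [l1_nonneg e]
    | succ τ ih =>
      obtain ⟨Ω, hΩ, hsub, htop⟩ := hstep τ
      rw [mu_importance, hmuH] at hΩ
      rw [hmuH] at htop
      refine ⟨by rw [htop.1], ?_⟩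
      have hstepb := step_bound hs W δ₀ hδ0 hδ01 hrip0 x e hx (S τ) (S (τ+1)) Ω ih.1
        hΩ hsub htop
      have h02 : (0:ℝ) ≤ 0.2 := by norm_num
      have := mul_le_mul_of_nonneg_left ih.2 h02
      calc l2 ((x + e) - vrestrict (x + e) (S (τ+1)))
          ≤ 0.2 * l2 ((x + e) - vrestrict (x + e) (S τ)) + 4.4 * l1 e := hstepb
      _ ≤ 0.2 * ((0.2:ℝ)^τ * l2 (x + e) + 5.5 * l1 e) + 4.4 * l1 e := by linarith
      _ = (0.2:ℝ)^(τ+1) * l2 (x + e) + 5.5 * l1 e := by ring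
  obtain ⟨hcard, hbound⟩ := main t
  refine ⟨hcard, ?_⟩
  rw [mu_resid, hmuH]
  have h1 : (0.2:ℝ)^t ≤ (0.444:ℝ)^t := by
    apply pow_le_pow_left₀ (by norm_num) (by norm_num)
  have h2 : (5.5:ℝ) ≤ 14 + 7 / Real.sqrt s := by
    have : (0:ℝ) ≤ 7 / Real.sqrt s := by positivity
    linarith
  have h3 : 0 ≤ l2 (x + e) := l2_nonneg _
  have h4 : 0 ≤ l1 e := l1_nonneg _
  have h5 : (0.2:ℝ)^t * l2 (x + e) ≤ (0.444:ℝ)^t * l2 (x + e) :=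
    mul_le_mul_of_nonneg_right h1 h3
  have h6 : 5.5 * l1 e ≤ (14 + 7 / Real.sqrt s) * l1 e :=
    mul_le_mul_of_nonneg_right h2 h4
  calc l2 ((x + e) - vrestrict (x + e) (S t))
      ≤ (0.2:ℝ)^t * l2 (x + e) + 5.5 * l1 e := hbound
  _ ≤ (0.444:ℝ)^t * l2 (x + e) + (14 + 7 / Real.sqrt s) * l1 e := by linarith
end

section
/- Let W ∈ ℝ^{m×n} satisfy the RIP with constant δ_r, and let S, T ⊆ [n] be disjoint with |S ∪ T| ≤ r. Then for any x supported on T, ‖(W_{:,S})ᵀ W x‖₂ ≤ δ_r ‖x‖₂. -/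
open Finset Matrix

lemma rip_key {m n r : ℕ} (W : Matrix (Fin m) (Fin n) ℝ) (δ : ℝ) (hrip : RIP W r δ)
    (S T : Finset (Fin n)) (hdisj : Disjoint S T) (hcard : (S ∪ T).card ≤ r)
    (u v : Fin n → ℝ) (hu : ∀ i, i ∉ S → u i = 0) (hv : ∀ i, i ∉ T → v i = 0) :
    ∑ i, W.mulVec u i * W.mulVec v i ≤ δ * (∑ i, u i ^ 2 + ∑ i, v i ^ 2) / 2 := by
  have hsub : ∀ (f : Fin n → ℝ), (∀ i, i ∉ S ∪ T → f i = 0) →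
      (Finset.univ.filter (fun i => f i ≠ 0)).card ≤ r := by
    intro f hf
    refine le_trans (Finset.card_le_card ?_) hcard
    intro i hi
    simp only [Finset.mem_filter] at hi
    by_contra h
    exact hi.2 (hf i h)
  have h1 := (hrip (u + v) (hsub _ (by
    intro i hi
    simp only [Finset.mem_union, not_or] at hi
    simp [hu i hi.1, hv i hi.2]))).2
  have h2 := (hrip (u - v) (hsub _ (by
    intro i hi
    simp only [Finset.mem_union, not_or] at hi
    simp [hu i hi.1, hv i hi.2]))).1
  have horth : ∑ i, u i * v i = 0 := by
    refine Finset.sum_eq_zero fun i _ => ?_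
    by_cases h : i ∈ S
    · rw [hv i (Finset.disjoint_left.mp hdisj h), mul_zero]
    · rw [hu i h, zero_mul]
  rw [Matrix.mulVec_add] at h1
  rw [Matrix.mulVec_sub] at h2
  simp only [Pi.add_apply, Pi.sub_apply, add_sq, sub_sq, Finset.sum_add_distrib,
    Finset.sum_sub_distrib] at h1 h2
  have e1 : ∑ i, 2 * W.mulVec u i * W.mulVec v i = 2 * ∑ i, W.mulVec u i * W.mulVec v i := by
    rw [Finset.mul_sum]; exact Finset.sum_congr rfl fun i _ => by ring
  have e2 : ∑ i, 2 * u i * v i = (0 : ℝ) := by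
    have h : ∑ i, 2 * u i * v i = 2 * ∑ i, u i * v i := by
      rw [Finset.mul_sum]; exact Finset.sum_congr rfl fun i _ => by ring
    rw [h, horth, mul_zero]
  rw [e1, e2] at h1 h2
  nlinarith [h1, h2]

theorem rip_near_orthogonality {m n r : ℕ} (W : Matrix (Fin m) (Fin n) ℝ)
    (δ : ℝ) (hδ : 0 ≤ δ) (hrip : RIP W r δ)
    (S T : Finset (Fin n)) (hdisj : Disjoint S T) (hcard : (S ∪ T).card ≤ r)
    (x : Fin n → ℝ) (hx : ∀ i, i ∉ T → x i = 0) :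
    l2 (vrestrict ((Wᵀ * W).mulVec x) S) ≤ δ * l2 x := by
  set z := (Wᵀ * W).mulVec x with hz
  set y := vrestrict z S with hy
  have hy0 : ∀ j, j ∉ S → y j = 0 := fun j hj => by simp [hy, vrestrict, hj]
  have hdot : ∑ i, W.mulVec x i * W.mulVec y i = ∑ j, z j * y j := by
    have h : (W *ᵥ x) ⬝ᵥ (W *ᵥ y) = ((Wᵀ * W) *ᵥ x) ⬝ᵥ y := by
      rw [Matrix.dotProduct_mulVec, ← Matrix.mulVec_transpose, Matrix.mulVec_mulVec]
    simpa [dotProduct] using h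
  have hyx : ∑ j, y j ^ 2 = ∑ i, W.mulVec x i * W.mulVec y i := by
    rw [hdot]
    refine Finset.sum_congr rfl fun j _ => ?_
    by_cases h : j ∈ S <;> simp [hy, vrestrict, h, sq]
  have hsu : (0:ℝ) ≤ ∑ j, y j ^ 2 := Finset.sum_nonneg fun j _ => sq_nonneg _
  have hsx : (0:ℝ) ≤ ∑ j, x j ^ 2 := Finset.sum_nonneg fun j _ => sq_nonneg _
  have ha2 : l2 y ^ 2 = ∑ j, y j ^ 2 := Real.sq_sqrt hsu
  have hb2 : l2 x ^ 2 = ∑ j, x j ^ 2 := Real.sq_sqrt hsx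
  have ha0 : 0 ≤ l2 y := Real.sqrt_nonneg _
  have hb0 : 0 ≤ l2 x := Real.sqrt_nonneg _
  show l2 y ≤ δ * l2 x
  rcases eq_or_lt_of_le ha0 with ha | ha
  · rw [← ha]; positivity
  rcases eq_or_lt_of_le hb0 with hb | hb
  · exfalso
    have hx0 : ∀ j, x j = 0 := by
      intro j
      have := (Finset.sum_eq_zero_iff_of_nonneg (fun i _ => sq_nonneg (x i))).mp
        (by rw [← hb2, ← hb]; ring) j (Finset.mem_univ j)
      exact pow_eq_zero_iff (two_ne_zero) |>.mp this
    have hWx : W.mulVec x = 0 := by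
      funext i; simp [Matrix.mulVec, dotProduct, hx0]
    have : ∑ j, y j ^ 2 = 0 := by rw [hyx, hWx]; simp
    rw [← ha2] at this
    nlinarith
  -- main case
  set a := l2 y
  set b := l2 x
  have hc := rip_key W δ hrip S T hdisj hcard (fun j => (b / a) * y j) x
    (fun j hj => by show b / a * y j = 0; rw [hy0 j hj, mul_zero]) hx
  have hmv : W.mulVec (fun j => (b / a) * y j) = fun i => (b / a) * W.mulVec y i := by
    funext i
    simp [Matrix.mulVec, dotProduct, Finset.mul_sum]
    exact Finset.sum_congr rfl fun j _ => by ring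
  rw [hmv] at hc
  have e1 : ∑ i, (b / a) * W.mulVec y i * W.mulVec x i
      = (b / a) * ∑ i, W.mulVec x i * W.mulVec y i := by
    rw [Finset.mul_sum]; exact Finset.sum_congr rfl fun i _ => by ring
  have e2 : ∑ j, ((b / a) * y j) ^ 2 = (b / a) ^ 2 * ∑ j, y j ^ 2 := by
    rw [Finset.mul_sum]; exact Finset.sum_congr rfl fun j _ => by ring
  rw [e1, e2, ← hyx, ← ha2, ← hb2] at hc
  have hane : a ≠ 0 := ne_of_gt ha
  have key2 : a * b ≤ δ * b ^ 2 := by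
    have h3 : (b / a) * a ^ 2 = a * b := by field_simp
    have h4 : (b / a) ^ 2 * a ^ 2 = b ^ 2 := by field_simp
    rw [h3, h4] at hc
    linarith
  nlinarith [key2, hb]
end
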